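/- Suppose F is algebraically closed and E, E' are finite subgroups of (F, +), both of rank r. Suppose that for every tuple (a_1, …, a_r) of nonnegative integers satisfying Σ_{i=1}^{r-1} a_i p^{r-i}(p^i − 1) = a_r (p^r − 1), one has (∏_{i=1}^{r-1} d_{i,r}(E)^{a_i}) · d_{r,r}(E')^{a_r} = (∏_{i=1}^{r-1} d_{i,r}(E')^{a_i}) · d_{r,r}(E)^{a_r}. Then E' = α•E for some α ∈ F^×. -/

import Mathlib

open Polynomial Pointwise

/-- `dCoef p r i E` is the Dickson-type coefficient `d_{i,r}(E)`: the coefficient of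
`X ^ (p ^ (r - i))` in `∏_{c ∈ E} (X - c)`. -/
noncomputable def dCoef {F : Type*} [Field F] (p r i : ℕ)
    (E : AddSubgroup F) [Fintype E] : F :=
  (∏ c : E, (X - C (c : F))).coeff (p ^ (r - i))

section auxiliary

lemma exists_choose_not_dvd {p n : ℕ} [Fact p.Prime] (hn : 2 ≤ n) (hnp : ∀ k, n ≠ p ^ k) :
    ∃ j, 0 < j ∧ j < n ∧ ¬ (p ∣ n.choose j) := by
  have hp := Fact.out (p := p.Prime)
  obtain ⟨e, m, hpm, hmul⟩ : ∃ e m, ¬ p ∣ m ∧ n = p ^ e * m :=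
    ⟨n.factorization p, n / p ^ n.factorization p,
      Nat.not_dvd_ordCompl hp (by omega), (Nat.ordProj_mul_ordCompl_eq_self n p).symm⟩
  have hpe : 0 < p ^ e := pow_pos hp.pos e
  have hm1 : m ≠ 1 := by rintro rfl; exact hnp e (by omega)
  have hm0 : m ≠ 0 := by rintro rfl; omega
  have hm2 : 2 ≤ m := by omega
  refine ⟨p ^ e, hpe, ?_, ?_⟩
  · have := Nat.mul_lt_mul_of_pos_left (show 1 < m by omega) hpe
    omega
  · have hl := Choose.choose_modEq_choose_mul_prod_range_choose (n := n) (k := p ^ e) (p := p) e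
    have h1 : n / p ^ e = m := by rw [hmul]; exact Nat.mul_div_cancel_left m hpe
    have h2 : p ^ e / p ^ e = 1 := Nat.div_self hpe
    have h4 : ∀ i ∈ Finset.range e, p ^ e / p ^ i % p = 0 := by
      intro i hi
      simp only [Finset.mem_range] at hi
      rw [Nat.pow_div (by omega) hp.pos, ← Nat.dvd_iff_mod_eq_zero]
      exact dvd_pow_self p (by omega)
    rw [h1, h2] at hl
    have hprod : ∏ i ∈ Finset.range e, (n / p ^ i % p).choose (p ^ e / p ^ i % p) = 1 := by
      apply Finset.prod_eq_one
      intro i hi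
      rw [h4 i hi, Nat.choose_zero_right]
    rw [hprod, Nat.choose_one_right] at hl
    push_cast at hl
    rw [mul_one] at hl
    -- hl : n.choose (p ^ e) ≡ m [ZMOD p]
    intro hdvd
    have : (p : ℤ) ∣ (m : ℤ) := by
      have hd := Int.ModEq.dvd hl
      have h5 : (p : ℤ) ∣ (n.choose (p ^ e) : ℤ) := Int.natCast_dvd_natCast.mpr hdvd
      simpa using dvd_add hd h5
    exact hpm (Int.natCast_dvd_natCast.mp this)

lemma fE_natDegree {F : Type*} [Field F] (E : AddSubgroup F) [Fintype E] :
    (∏ c : E, (X - C (c : F))).natDegree = Fintype.card E := by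
  rw [natDegree_prod _ _ (fun c _ => X_sub_C_ne_zero _)]
  simp [natDegree_X_sub_C, Finset.card_univ]

lemma fE_shift {F : Type*} [Field F] (E : AddSubgroup F) [Fintype E] (a : E) :
    (∏ c : E, (X - C (c : F))).comp (X + C (a : F)) = ∏ c : E, (X - C (c : F)) := by
  rw [prod_comp]
  have h1 : ∀ c : E, (X - C (c : F)).comp (X + C (a : F)) = X - C ((c : F) - (a : F)) := by
    intro c; simp [sub_comp, map_sub]; ring
  calc (∏ c : E, (X - C (c : F)).comp (X + C (a : F)))
      = ∏ c : E, (X - C ((c : F) - (a : F))) := Finset.prod_congr rfl (fun c _ => h1 c)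
    _ = ∏ c : E, (X - C (c : F)) := by
        apply Fintype.prod_equiv (Equiv.subRight a)
        intro c
        simp [Equiv.subRight]

lemma key_binom {F : Type*} [Field F] (E : AddSubgroup F) [Fintype E] {k n₀ : ℕ}
    (hk : 1 ≤ k) (hkn : k < n₀) :
    (∏ c : E, (X - C (c : F))).coeff n₀ * ((n₀.choose k : ℕ) : F) = 0 := by
  classical
  set f : F[X] := ∏ c : E, (X - C (c : F)) with hf
  set Q : F[X] := ∑ n ∈ f.support, C (f.coeff n * ((n.choose k : ℕ) : F)) * X ^ (n - k) with hQ
  have heval : ∀ a : E, Q.eval (a : F) = f.coeff k := by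
    intro a
    have w1 : (f.comp (X + C (a : F))).coeff k = f.coeff k := by rw [fE_shift E a]
    have w2 : (f.comp (X + C (a : F))).coeff k
        = ∑ n ∈ f.support, f.coeff n * ((a : F) ^ (n - k) * ((n.choose k : ℕ) : F)) := by
      rw [comp_eq_sum_left, Polynomial.sum, finset_sum_coeff]
      apply Finset.sum_congr rfl
      intro n _
      rw [coeff_C_mul, coeff_X_add_C_pow]
    have w3 : Q.eval (a : F)
        = ∑ n ∈ f.support, f.coeff n * ((a : F) ^ (n - k) * ((n.choose k : ℕ) : F)) := by
      rw [hQ, eval_finset_sum]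
      apply Finset.sum_congr rfl
      intro n _
      simp only [eval_mul, eval_C, eval_pow, eval_X]
      ring
    rw [w3, ← w2, w1]
  have hzero : Q - C (f.coeff k) = 0 := by
    apply eq_zero_of_natDegree_lt_card_of_eval_eq_zero _
      (Subtype.val_injective : Function.Injective ((↑) : E → F))
    · intro c
      simp [heval c]
    · have hN : 1 ≤ Fintype.card E := Fintype.card_pos
      have hQle : Q.natDegree ≤ Fintype.card E - 1 := by
        apply Polynomial.natDegree_sum_le_of_forall_le
        intro n hn
        refine le_trans (natDegree_C_mul_X_pow_le _ _) ?_
        have hnd : n ≤ f.natDegree := le_natDegree_of_mem_supp n hn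
        have : f.natDegree = Fintype.card E := fE_natDegree E
        omega
      have := natDegree_sub_le Q (C (f.coeff k))
      simp only [natDegree_C] at this
      omega
  have hQC : Q = C (f.coeff k) := by linear_combination (norm := ring_nf) hzero
  have hc := congrArg (fun q => Polynomial.coeff q (n₀ - k)) hQC
  simp only [hQ, finset_sum_coeff, coeff_C_mul, coeff_C, coeff_X_pow] at hc
  rw [Finset.sum_eq_single n₀] at hc
  · rw [if_pos rfl] at hc
    rw [if_neg (by omega : ¬ (n₀ - k = 0))] at hc
    simpa using hc
  · intro n _ hne
    rw [if_neg (by omega : ¬ (n₀ - k = n - k))]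
    ring
  · intro hn
    have : f.coeff n₀ = 0 := notMem_support_iff.mp hn
    simp [this]

/-- coefficients at non-`p`-power indices vanish -/
lemma fE_coeff_eq_zero {F : Type*} [Field F] {p : ℕ} [Fact p.Prime] [CharP F p]
    (E : AddSubgroup F) [Fintype E] {n : ℕ} (hn : ∀ k, n ≠ p ^ k) :
    (∏ c : E, (X - C (c : F))).coeff n = 0 := by
  have hp := Fact.out (p := p.Prime)
  rcases Nat.eq_zero_or_pos n with rfl | hn0
  · rw [coeff_zero_eq_eval_zero]
    rw [eval_prod]
    apply Finset.prod_eq_zero (Finset.mem_univ (0 : E))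
    simp
  · have hn1 : n ≠ 1 := by have := hn 0; simpa using this
    have h2 : 2 ≤ n := by omega
    obtain ⟨j, hj0, hjn, hjd⟩ := exists_choose_not_dvd h2 hn
    have hkey := key_binom E (k := j) (n₀ := n) hj0 hjn
    have hcast : ((n.choose j : ℕ) : F) ≠ 0 := by
      rw [Ne, CharP.cast_eq_zero_iff F p]; exact hjd
    exact (mul_eq_zero.mp hkey).resolve_right hcast

lemma fE_coeff_one_ne_zero {F : Type*} [Field F] (E : AddSubgroup F) [Fintype E] :
    (∏ c : E, (X - C (c : F))).coeff 1 ≠ 0 := by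
  classical
  have hsplit : (∏ c : E, (X - C (c : F)))
      = (X - C ((0 : E) : F)) * ∏ c ∈ (Finset.univ : Finset E) \ {0}, (X - C (c : F)) :=
    Finset.prod_eq_mul_prod_sdiff_singleton_of_mem (Finset.mem_univ (0 : E)) _
  rw [hsplit]
  simp only [ZeroMemClass.coe_zero, map_zero, sub_zero]
  rw [coeff_X_mul, coeff_zero_eq_eval_zero, eval_prod]
  rw [Finset.prod_ne_zero_iff]
  intro c hc
  simp only [eval_sub, eval_X, eval_C, zero_sub, ne_eq, neg_eq_zero]
  intro h0
  rw [Finset.mem_sdiff, Finset.mem_singleton] at hc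
  exact hc.2 (Subtype.ext h0)

lemma coeff_comp_C_mul_X {F : Type*} [CommRing F] (q : F[X]) (α : F) (n : ℕ) :
    (q.comp (C α * X)).coeff n = q.coeff n * α ^ n := by
  classical
  rw [comp_eq_sum_left, Polynomial.sum, finset_sum_coeff]
  have hterm : ∀ e : ℕ, (C (q.coeff e) * (C α * X) ^ e).coeff n
      = if n = e then q.coeff e * α ^ e else 0 := by
    intro e
    rw [mul_pow, ← C_pow, ← mul_assoc, ← C_mul, coeff_C_mul, coeff_X_pow]
    split_ifs <;> ring
  rw [Finset.sum_congr rfl (fun e _ => hterm e)]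
  rw [Finset.sum_ite_eq]
  split_ifs with hmem
  · rfl
  · rw [notMem_support_iff.mp hmem, zero_mul]

lemma finset_gcd_bezout {ι : Type*} [DecidableEq ι] (s : Finset ι) (w : ι → ℕ) :
    ∃ m : ι → ℤ, ((s.gcd w : ℕ) : ℤ) = ∑ j ∈ s, m j * w j := by
  induction s using Finset.induction_on with
  | empty => exact ⟨0, by simp⟩
  | @insert a s ha ih =>
    obtain ⟨m, hm⟩ := ih
    refine ⟨fun j => if j = a then Nat.gcdA (w a) (s.gcd w)
      else Nat.gcdB (w a) (s.gcd w) * m j, ?_⟩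
    rw [Finset.sum_insert ha, Finset.gcd_insert]
    beta_reduce
    rw [if_pos rfl]
    have hg : (GCDMonoid.gcd (w a) (s.gcd w) : ℕ) = Nat.gcd (w a) (s.gcd w) := rfl
    rw [hg, Nat.gcd_eq_gcd_ab]
    have hrest : ∑ j ∈ s, (if j = a then Nat.gcdA (w a) (s.gcd w)
        else Nat.gcdB (w a) (s.gcd w) * m j) * (w j : ℤ)
        = Nat.gcdB (w a) (s.gcd w) * ∑ j ∈ s, m j * w j := by
      rw [Finset.mul_sum]
      apply Finset.sum_congr rfl
      intro j hj
      rw [if_neg (by rintro rfl; exact ha hj)]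
      ring
    rw [hrest, ← hm]
    ring

end auxiliary

/-- Over an algebraically closed `F`, if two finite subgroups `E, E'` of
rank `r` agree on all weight-zero monomial invariants in the Dickson coefficients,
then `E' = α • E` for some `α ≠ 0`. -/
theorem statement6 {F : Type*} [Field F] [IsAlgClosed F] {p : ℕ} [Fact p.Prime]
    [CharP F p] (r : ℕ) (E E' : AddSubgroup F) [Fintype E] [Fintype E']
    (hE : Fintype.card E = p ^ r) (hE' : Fintype.card E' = p ^ r)
    (h : ∀ a : ℕ → ℕ,
      (∑ i ∈ Finset.Ico 1 r, a i * (p ^ (r - i) * (p ^ i - 1))) = a r * (p ^ r - 1) →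
      (∏ i ∈ Finset.Ico 1 r, dCoef p r i E ^ a i) * dCoef p r r E' ^ a r =
        (∏ i ∈ Finset.Ico 1 r, dCoef p r i E' ^ a i) * dCoef p r r E ^ a r) :
    ∃ α : F, α ≠ 0 ∧ (E' : Set F) = α • (E : Set F) := by
  classical
  have hp := Fact.out (p := p.Prime)
  rcases Nat.eq_zero_or_pos r with rfl | hr
  · -- r = 0 : both subgroups are trivial
    refine ⟨1, one_ne_zero, ?_⟩
    have hbot : ∀ (G : AddSubgroup F) (_ : Fintype G), Fintype.card G = 1 → (G : Set F) = {0} := by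
      intro G _ hG
      have : G = ⊥ := AddSubgroup.eq_bot_of_card_eq G (by simpa [Nat.card_eq_fintype_card] using hG)
      rw [this]; rfl
    rw [hbot E' _ (by simpa using hE'), hbot E _ (by simpa using hE)]
    simp [Set.smul_set_singleton]
  -- main case r ≥ 1
  have hp2 : 2 ≤ p := hp.two_le
  have hq1 : 2 ≤ p ^ r := by
    calc 2 = 2 ^ 1 := rfl
    _ ≤ p ^ r := Nat.pow_le_pow_left hp2 1 |>.trans (Nat.pow_le_pow_right (by omega) hr)
  set w : ℕ → ℕ := fun i => p ^ (r - i) * (p ^ i - 1) with hw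
  set x : ℕ → F := fun i => dCoef p r i E with hx
  set y : ℕ → F := fun i => dCoef p r i E' with hy
  set f : F[X] := ∏ c : E, (X - C (c : F)) with hf
  set f' : F[X] := ∏ c : E', (X - C (c : F)) with hf'
  have hwr : w r = p ^ r - 1 := by simp [hw]
  have hwr1 : 1 ≤ w r := by omega
  have hwpos : ∀ i, 1 ≤ i → i ≤ r → 0 < w i := by
    intro i h1 h2
    have hpi : p ≤ p ^ i := Nat.le_self_pow (by omega) p
    have hpri : 0 < p ^ (r - i) := pow_pos (by omega) _
    simp only [hw]
    exact Nat.mul_pos hpri (by omega)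
  have hwid : ∀ i, i ≤ r → w i = p ^ r - p ^ (r - i) := by
    intro i hir
    have h1 : p ^ (r - i) * p ^ i = p ^ r := by rw [← pow_add]; congr 1; omega
    have h2 : p ^ i = (p ^ i - 1) + 1 := by
      have : 0 < p ^ i := pow_pos (by omega) _; omega
    have h3 : p ^ r = p ^ (r - i) * (p ^ i - 1) + p ^ (r - i) := by
      rw [← h1]; nth_rewrite 1 [h2]; ring
    simp only [hw]; omega
  have hxc : ∀ i, x i = f.coeff (p ^ (r - i)) := by intro i; rw [hx, hf]; rfl
  have hyc : ∀ i, y i = f'.coeff (p ^ (r - i)) := by intro i; rw [hy, hf']; rfl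
  have hfdeg : f.natDegree = p ^ r := by rw [hf, fE_natDegree]; exact hE
  have hfdeg' : f'.natDegree = p ^ r := by rw [hf', fE_natDegree]; exact hE'
  have hfmonic : f.Monic := monic_prod_of_monic _ _ fun c _ => monic_X_sub_C _
  have hfmonic' : f'.Monic := monic_prod_of_monic _ _ fun c _ => monic_X_sub_C _
  have hx0 : x 0 = 1 := by
    rw [hxc, Nat.sub_zero, ← hfdeg]; exact hfmonic.coeff_natDegree
  have hy0 : y 0 = 1 := by
    rw [hyc, Nat.sub_zero, ← hfdeg']; exact hfmonic'.coeff_natDegree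
  have hxr : x r ≠ 0 := by
    rw [hxc, Nat.sub_self, pow_zero, hf]; exact fE_coeff_one_ne_zero E
  have hyr : y r ≠ 0 := by
    rw [hyc, Nat.sub_self, pow_zero, hf']; exact fE_coeff_one_ne_zero E'
  clear_value w x y f f'
  -- restated hypothesis
  have h' : ∀ a : ℕ → ℕ, (∑ i ∈ Finset.Ico 1 r, a i * w i) = a r * w r →
      (∏ i ∈ Finset.Ico 1 r, x i ^ a i) * y r ^ a r
      = (∏ i ∈ Finset.Ico 1 r, y i ^ a i) * x r ^ a r := by
    intro a ha
    have ha' : (∑ i ∈ Finset.Ico 1 r, a i * (p ^ (r - i) * (p ^ i - 1))) = a r * (p ^ r - 1) := by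
      rw [← hwr]; simpa only [hw] using ha
    simpa only [hx, hy] using h a ha'
  -- transfer of vanishing
  have htrans : ∀ i, 1 ≤ i → i < r → (x i = 0 ↔ y i = 0) := by
    intro i h1 h2
    have hine : i ≠ r := by omega
    set a : ℕ → ℕ := fun j => if j = i then p ^ r - 1 else if j = r then w i else 0 with ha
    have hai : a i = p ^ r - 1 := by simp [ha]
    have har : a r = w i := by simp [ha, Ne.symm hine]
    have haj : ∀ j, j ≠ i → j ≠ r → a j = 0 := by
      intro j hji hjr; simp [ha, hji, hjr]
    have hcon : (∑ j ∈ Finset.Ico 1 r, a j * w j) = a r * w r := by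
      rw [Finset.sum_eq_single i]
      · rw [hai, har, hwr]; ring
      · intro j hj hji
        rw [haj j hji (by simp only [Finset.mem_Ico] at hj; omega), zero_mul]
      · intro hi; exact absurd (Finset.mem_Ico.mpr ⟨h1, h2⟩) hi
    have heq := h' a hcon
    have hprodx : (∏ j ∈ Finset.Ico 1 r, x j ^ a j) = x i ^ (p ^ r - 1) := by
      rw [Finset.prod_eq_single i]
      · rw [hai]
      · intro j hj hji
        rw [haj j hji (by simp only [Finset.mem_Ico] at hj; omega), pow_zero]
      · intro hi; exact absurd (Finset.mem_Ico.mpr ⟨h1, h2⟩) hi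
    have hprody : (∏ j ∈ Finset.Ico 1 r, y j ^ a j) = y i ^ (p ^ r - 1) := by
      rw [Finset.prod_eq_single i]
      · rw [hai]
      · intro j hj hji
        rw [haj j hji (by simp only [Finset.mem_Ico] at hj; omega), pow_zero]
      · intro hi; exact absurd (Finset.mem_Ico.mpr ⟨h1, h2⟩) hi
    rw [hprodx, hprody, har] at heq
    have hpow0 : p ^ r - 1 ≠ 0 := by omega
    constructor
    · intro hxi
      rw [hxi, zero_pow hpow0, zero_mul] at heq
      rcases mul_eq_zero.mp heq.symm with h3 | h3
      · exact pow_eq_zero_iff hpow0 |>.mp h3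
      · exact absurd (pow_eq_zero_iff (by have := hwpos i h1 (by omega); omega) |>.mp h3) hxr
    · intro hyi
      rw [hyi, zero_pow hpow0, zero_mul] at heq
      rcases mul_eq_zero.mp heq with h3 | h3
      · exact pow_eq_zero_iff hpow0 |>.mp h3
      · exact absurd (pow_eq_zero_iff (by have := hwpos i h1 (by omega); omega) |>.mp h3) hyr
  -- support set
  set S : Finset ℕ := (Finset.Icc 1 r).filter (fun j => x j ≠ 0) with hS
  have hrS : r ∈ S := by
    rw [hS, Finset.mem_filter]
    exact ⟨Finset.mem_Icc.mpr ⟨hr, le_refl r⟩, hxr⟩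
  have hSx : ∀ j ∈ S, x j ≠ 0 := by intro j hj; rw [hS, Finset.mem_filter] at hj; exact hj.2
  have hSIcc : ∀ j ∈ S, j ∈ Finset.Icc 1 r := by
    intro j hj; rw [hS, Finset.mem_filter] at hj; exact hj.1
  have hSy : ∀ j ∈ S, y j ≠ 0 := by
    intro j hj
    have hj' := Finset.mem_Icc.mp (hSIcc j hj)
    rcases Nat.lt_or_ge j r with hlt | hge
    · intro hyj; exact hSx j hj ((htrans j hj'.1 hlt).mpr hyj)
    · have : j = r := by omega
      rw [this]; exact hyr
  have hnotS : ∀ j, 1 ≤ j → j ≤ r → j ∉ S → x j = 0 ∧ y j = 0 := by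
    intro j h1 h2 hj
    have hxj : x j = 0 := by
      by_contra hne
      exact hj (by rw [hS, Finset.mem_filter]; exact ⟨Finset.mem_Icc.mpr ⟨h1, h2⟩, hne⟩)
    have hjr : j < r := by
      rcases Nat.lt_or_ge j r with hlt | hge
      · exact hlt
      · exfalso; apply hxr; rw [show r = j by omega]; exact hxj
    exact ⟨hxj, (htrans j h1 hjr).mp hxj⟩
  set u : ℕ → F := fun j => y j / x j with hu
  have hSu : ∀ j ∈ S, u j ≠ 0 := by
    intro j hj; rw [hu]; exact div_ne_zero (hSy j hj) (hSx j hj)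
  have hur : u r ≠ 0 := hSu r hrS
  have hIcc : Finset.Icc 1 r = insert r (Finset.Ico 1 r) := (Finset.Ico_insert_right hr).symm
  have hrIco : r ∉ Finset.Ico 1 r := by simp
  -- the central combinatorial step
  have star : ∀ a b : ℕ → ℕ, (∀ j ∈ Finset.Ico 1 r, a j ≠ 0 → j ∈ S) →
      (∀ j ∈ Finset.Ico 1 r, b j ≠ 0 → j ∈ S) →
      (∑ j ∈ Finset.Icc 1 r, a j * w j) = (∑ j ∈ Finset.Icc 1 r, b j * w j) →
      (∏ j ∈ Finset.Icc 1 r, u j ^ a j) = ∏ j ∈ Finset.Icc 1 r, u j ^ b j := by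
    intro a b ha hb hsum
    set A' := ∑ j ∈ Finset.Ico 1 r, a j * w j with hA'
    set B' := ∑ j ∈ Finset.Ico 1 r, b j * w j with hB'
    rw [hIcc, Finset.sum_insert hrIco, Finset.sum_insert hrIco] at hsum
    have hsum' : A' + a r * w r = B' + b r * w r := by omega
    have hbr : b r ≤ A' + a r := by
      have h2 : A' ≤ A' * w r := Nat.le_mul_of_pos_right _ (by omega)
      have h1 : b r * w r ≤ (A' + a r) * w r := by
        calc b r * w r ≤ A' + a r * w r := by omega
          _ ≤ A' * w r + a r * w r := by omega
          _ = (A' + a r) * w r := (add_mul _ _ _).symm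
      exact Nat.le_of_mul_le_mul_right h1 (by omega)
    set Cc : ℕ → ℕ := fun j => if j = r then A' else w r * a j with hCc
    set Dd : ℕ → ℕ := fun j => if j = r then A' + a r - b r else (w r - 1) * a j + b j with hDd
    have hCcon : (∑ j ∈ Finset.Ico 1 r, Cc j * w j) = Cc r * w r := by
      have h1 : ∀ j ∈ Finset.Ico 1 r, Cc j * w j = w r * (a j * w j) := by
        intro j hj
        have hjr : j ≠ r := by simp only [Finset.mem_Ico] at hj; omega
        simp only [hCc, if_neg hjr]; ring
      rw [Finset.sum_congr rfl h1, ← Finset.mul_sum]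
      simp only [hCc, if_pos rfl, ← hA']
      ring
    have hDcon : (∑ j ∈ Finset.Ico 1 r, Dd j * w j) = Dd r * w r := by
      have h1 : ∀ j ∈ Finset.Ico 1 r, Dd j * w j = (w r - 1) * (a j * w j) + b j * w j := by
        intro j hj
        have hjr : j ≠ r := by simp only [Finset.mem_Ico] at hj; omega
        simp only [hDd, if_neg hjr]; ring
      rw [Finset.sum_congr rfl h1, Finset.sum_add_distrib, ← Finset.mul_sum, ← hA', ← hB']
      simp only [hDd, if_pos rfl]
      have hgoal : (w r - 1) * A' + B' = (A' + a r - b r) * w r := by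
        zify [hwr1, hbr]
        have hz : (A' : ℤ) + a r * w r = B' + b r * w r := by exact_mod_cast hsum'
        linear_combination -hz
      exact hgoal
    have hC := h' Cc hCcon
    have hD := h' Dd hDcon
    set Pa := ∏ j ∈ Finset.Ico 1 r, u j ^ a j with hPa'
    set Pb := ∏ j ∈ Finset.Ico 1 r, u j ^ b j with hPb'
    have hPa0 : Pa ≠ 0 := by
      rw [hPa', Finset.prod_ne_zero_iff]
      intro j hj
      by_cases haj : a j = 0
      · rw [haj, pow_zero]; exact one_ne_zero
      · exact pow_ne_zero _ (hSu j (ha j hj haj))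
    have hPb0 : Pb ≠ 0 := by
      rw [hPb', Finset.prod_ne_zero_iff]
      intro j hj
      by_cases hbj : b j = 0
      · rw [hbj, pow_zero]; exact one_ne_zero
      · exact pow_ne_zero _ (hSu j (hb j hj hbj))
    -- derive the two u-relations
    have hxCne : (∏ j ∈ Finset.Ico 1 r, x j ^ Cc j) ≠ 0 := by
      rw [Finset.prod_ne_zero_iff]
      intro j hj
      have hjr : j ≠ r := by simp only [Finset.mem_Ico] at hj; omega
      by_cases haj : a j = 0
      · simp [hCc, if_neg hjr, haj]
      · exact pow_ne_zero _ (hSx j (ha j hj haj))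
    have hxDne : (∏ j ∈ Finset.Ico 1 r, x j ^ Dd j) ≠ 0 := by
      rw [Finset.prod_ne_zero_iff]
      intro j hj
      have hjr : j ≠ r := by simp only [Finset.mem_Ico] at hj; omega
      by_cases hj0 : (w r - 1) * a j + b j = 0
      · simp [hDd, if_neg hjr, hj0]
      · have : a j ≠ 0 ∨ b j ≠ 0 := by
          by_contra hcon; push_neg at hcon; apply hj0; rw [hcon.1, hcon.2]; ring
        have hxj : x j ≠ 0 := by
          rcases this with h5 | h5
          · exact hSx j (ha j hj h5)
          · exact hSx j (hb j hj h5)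
        exact pow_ne_zero _ hxj
    have hkey : ∀ (cfun : ℕ → ℕ), (∏ j ∈ Finset.Ico 1 r, x j ^ cfun j) ≠ 0 →
        ((∏ j ∈ Finset.Ico 1 r, x j ^ cfun j) * y r ^ cfun r
          = (∏ j ∈ Finset.Ico 1 r, y j ^ cfun j) * x r ^ cfun r) →
        (∏ j ∈ Finset.Ico 1 r, u j ^ cfun j) = u r ^ cfun r := by
      intro cfun hne heq
      have hxr' : x r ^ cfun r ≠ 0 := pow_ne_zero _ hxr
      have hdistrib : (∏ j ∈ Finset.Ico 1 r, u j ^ cfun j)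
          = (∏ j ∈ Finset.Ico 1 r, y j ^ cfun j) / (∏ j ∈ Finset.Ico 1 r, x j ^ cfun j) := by
        rw [hu, ← Finset.prod_div_distrib]
        apply Finset.prod_congr rfl
        intro j _
        rw [div_pow]
      rw [hdistrib, hu, div_pow, div_eq_div_iff hne hxr']
      linear_combination -heq
    have h1 := hkey Cc hxCne hC
    have h2 := hkey Dd hxDne hD
    have hCr : Cc r = A' := by simp [hCc]
    have hDr : Dd r = A' + a r - b r := by simp [hDd]
    have hCprod : (∏ j ∈ Finset.Ico 1 r, u j ^ Cc j) = Pa ^ w r := by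
      rw [hPa', ← Finset.prod_pow]
      apply Finset.prod_congr rfl
      intro j hj
      have hjr : j ≠ r := by simp only [Finset.mem_Ico] at hj; omega
      rw [hCc]; simp only [if_neg hjr]
      rw [mul_comm (w r) (a j), pow_mul]
    have hDprod : (∏ j ∈ Finset.Ico 1 r, u j ^ Dd j) = Pa ^ (w r - 1) * Pb := by
      rw [hPa', hPb', ← Finset.prod_pow, ← Finset.prod_mul_distrib]
      apply Finset.prod_congr rfl
      intro j hj
      have hjr : j ≠ r := by simp only [Finset.mem_Ico] at hj; omega
      rw [hDd]; simp only [if_neg hjr]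
      rw [pow_add, mul_comm (w r - 1) (a j), pow_mul]
    rw [hCprod, hCr] at h1
    rw [hDprod, hDr] at h2
    -- conclude
    rw [hIcc, Finset.prod_insert hrIco, Finset.prod_insert hrIco, ← hPa', ← hPb']
    have hwrm : w r - 1 + 1 = w r := by omega
    have e1 : Pa ^ (w r - 1) * (u r ^ a r * Pa) = u r ^ (A' + a r) := by
      rw [show Pa ^ (w r - 1) * (u r ^ a r * Pa) = Pa ^ (w r - 1) * Pa * u r ^ a r by ring,
        ← pow_succ, hwrm, h1, ← pow_add]
    have e2 : Pa ^ (w r - 1) * (u r ^ b r * Pb) = u r ^ (A' + a r) := by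
      rw [show Pa ^ (w r - 1) * (u r ^ b r * Pb) = Pa ^ (w r - 1) * Pb * u r ^ b r by ring,
        h2, ← pow_add, show A' + a r - b r + b r = A' + a r by omega]
    exact mul_left_cancel₀ (pow_ne_zero _ hPa0) (e1.trans e2.symm)
  -- Bezout data
  set d := S.gcd w with hd
  have hd0 : d ≠ 0 := by
    intro h0
    have := Finset.gcd_eq_zero_iff.mp (hd ▸ h0) r hrS
    omega
  have hdvd : ∀ j ∈ S, d ∣ w j := fun j hj => Finset.gcd_dvd hj
  obtain ⟨m, hm⟩ := finset_gcd_bezout S w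
  set Mp : ℕ → ℕ := fun j => if j ∈ S then (m j).toNat else 0 with hMp
  set Mm : ℕ → ℕ := fun j => if j ∈ S then (-(m j)).toNat else 0 with hMm
  have hMsum : (∑ j ∈ Finset.Icc 1 r, (Mp j : ℤ) * w j)
      - (∑ j ∈ Finset.Icc 1 r, (Mm j : ℤ) * w j) = (d : ℤ) := by
    rw [← Finset.sum_sub_distrib]
    have hterm : ∀ j ∈ Finset.Icc 1 r, (Mp j : ℤ) * w j - (Mm j : ℤ) * w j
        = if j ∈ S then m j * w j else 0 := by
      intro j _
      by_cases hj : j ∈ S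
      · simp only [hMp, hMm, if_pos hj]
        rw [show ((m j).toNat : ℤ) * w j - ((-(m j)).toNat : ℤ) * w j
            = (((m j).toNat : ℤ) - ((-(m j)).toNat : ℤ)) * w j by ring]
        congr 1
        omega
      · simp [hMp, hMm, if_neg hj]
    rw [Finset.sum_congr rfl hterm, Finset.sum_ite_mem]
    have hinter : Finset.Icc 1 r ∩ S = S := by
      apply Finset.inter_eq_right.mpr
      intro j hj; exact hSIcc j hj
    rw [hinter, ← hm, hd]
  set γp : F := ∏ j ∈ Finset.Icc 1 r, u j ^ Mp j with hγp
  set γm : F := ∏ j ∈ Finset.Icc 1 r, u j ^ Mm j with hγm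
  have hγp0 : γp ≠ 0 := by
    rw [hγp, Finset.prod_ne_zero_iff]
    intro j hj
    by_cases hjS : j ∈ S
    · exact pow_ne_zero _ (hSu j hjS)
    · simp [hMp, if_neg hjS]
  have hγm0 : γm ≠ 0 := by
    rw [hγm, Finset.prod_ne_zero_iff]
    intro j hj
    by_cases hjS : j ∈ S
    · exact pow_ne_zero _ (hSu j hjS)
    · simp [hMm, if_neg hjS]
  obtain ⟨α, hα⟩ := IsAlgClosed.exists_pow_nat_eq (γp / γm) (show 0 < d by omega)
  have hα0 : α ≠ 0 := by
    intro h0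
    rw [h0, zero_pow hd0] at hα
    rcases div_eq_zero_iff.mp hα.symm with h1 | h1
    · exact hγp0 h1
    · exact hγm0 h1
  -- α realizes all the u j on S
  have hujα : ∀ j ∈ S, u j = α ^ w j := by
    intro j hjS
    have hjIcc : j ∈ Finset.Icc 1 r := hSIcc j hjS
    set qq := w j / d with hqq
    have hqd : d * qq = w j := Nat.mul_div_cancel' (hdvd j hjS)
    have hstar := star (fun k => qq * Mp k) (fun k => qq * Mm k + if k = j then 1 else 0)
      (by
        intro k _ hk
        have : Mp k ≠ 0 := by
          intro h0; apply hk; show qq * Mp k = 0; rw [h0, mul_zero]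
        by_contra hkS
        exact this (by simp [hMp, if_neg hkS]))
      (by
        intro k hkIco hk
        by_contra hkS
        apply hk
        have h5 : Mm k = 0 := by simp [hMm, if_neg hkS]
        have h6 : k ≠ j := by rintro rfl; exact hkS hjS
        show qq * Mm k + (if k = j then 1 else 0) = 0
        rw [h5, mul_zero, if_neg h6])
      (by
        have hcast : ((∑ k ∈ Finset.Icc 1 r, (qq * Mp k) * w k : ℕ) : ℤ)
            = ((∑ k ∈ Finset.Icc 1 r, (qq * Mm k + if k = j then 1 else 0) * w k : ℕ) : ℤ) := by
          push_cast
          have hL : ∑ k ∈ Finset.Icc 1 r, (qq : ℤ) * (Mp k : ℤ) * (w k : ℤ)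
              = qq * ∑ k ∈ Finset.Icc 1 r, (Mp k : ℤ) * w k := by
            rw [Finset.mul_sum]; apply Finset.sum_congr rfl; intro k _; ring
          have hR : ∑ k ∈ Finset.Icc 1 r, ((qq : ℤ) * (Mm k : ℤ) + if k = j then 1 else 0) * (w k : ℤ)
              = qq * (∑ k ∈ Finset.Icc 1 r, (Mm k : ℤ) * w k) + w j := by
            rw [Finset.sum_congr rfl (g := fun k => (qq : ℤ) * ((Mm k : ℤ) * w k)
                + if k = j then (w k : ℤ) else 0) (fun k _ => by
                  by_cases hkj : k = j <;> simp [hkj] <;> ring),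
              Finset.sum_add_distrib, ← Finset.mul_sum, Finset.sum_ite_eq' _ j, if_pos hjIcc]
          rw [hL, hR]
          have hqdz : (d : ℤ) * qq = w j := by exact_mod_cast hqd
          linear_combination (qq : ℤ) * hMsum + hqdz
        exact_mod_cast hcast)
    have hLprod : (∏ k ∈ Finset.Icc 1 r, u k ^ (qq * Mp k)) = γp ^ qq := by
      have hptw : ∀ k ∈ Finset.Icc 1 r, u k ^ (qq * Mp k) = (u k ^ Mp k) ^ qq := by
        intro k _
        rw [mul_comm qq (Mp k), pow_mul]
      rw [Finset.prod_congr rfl hptw, Finset.prod_pow, hγp]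
    have hRprod : (∏ k ∈ Finset.Icc 1 r, u k ^ (qq * Mm k + if k = j then 1 else 0))
        = γm ^ qq * u j := by
      have hptwise : ∀ k ∈ Finset.Icc 1 r, u k ^ (qq * Mm k + if k = j then 1 else 0)
          = (u k ^ Mm k) ^ qq * (if k = j then u k else 1) := by
        intro k _
        rw [pow_add, mul_comm qq (Mm k), pow_mul]
        congr 1
        split_ifs <;> simp
      rw [Finset.prod_congr rfl hptwise, Finset.prod_mul_distrib, Finset.prod_ite_eq' _ j,
        if_pos hjIcc, Finset.prod_pow, hγm]
    rw [hLprod, hRprod] at hstar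
    have hαd : α ^ (w j) = (γp / γm) ^ qq := by
      rw [← hqd, pow_mul, hα]
    rw [hαd, div_pow, eq_div_iff (pow_ne_zero _ hγm0)]
    linear_combination -hstar
  -- coefficientwise relation between f' and f
  have hcoe : ∀ i, i ≤ r → y i = α ^ w i * x i := by
    intro i hir
    rcases Nat.eq_zero_or_pos i with rfl | hi1
    · have : w 0 = 0 := by simp [hw]
      rw [this, pow_zero, one_mul, hx0, hy0]
    by_cases hiS : i ∈ S
    · have hthis := hujα i hiS
      simp only [hu] at hthis
      rw [div_eq_iff (hSx i hiS)] at hthis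
      rw [hthis, mul_comm]
    · obtain ⟨hxi, hyi⟩ := hnotS i hi1 hir hiS
      rw [hxi, hyi, mul_zero]
  -- the scaled polynomial
  set g : F[X] := ∏ c : E, (X - C (α * (c : F))) with hg
  have hgdeg : g.natDegree = p ^ r := by
    rw [hg, natDegree_prod _ _ (fun c _ => X_sub_C_ne_zero _),
      Finset.sum_congr rfl (fun (c : E) _ => natDegree_X_sub_C (α * (c : F)))]
    simp [Finset.card_univ, hE]
  have hgcomp : g.comp (C α * X) = C (α ^ (p ^ r)) * f := by
    rw [hg, prod_comp]
    have hterm : ∀ c : E, (X - C (α * (c : F))).comp (C α * X) = C α * (X - C (c : F)) := by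
      intro c
      simp only [sub_comp, X_comp, C_comp, mul_sub, ← C_mul]
    rw [Finset.prod_congr rfl (fun c _ => hterm c), Finset.prod_mul_distrib,
      Finset.prod_const, Finset.card_univ, hE, ← C_pow, hf]
  have hgcoeff : ∀ n, g.coeff n * α ^ n = α ^ (p ^ r) * f.coeff n := by
    intro n
    have := congrArg (fun q => Polynomial.coeff q n) hgcomp
    simp only [coeff_comp_C_mul_X, coeff_C_mul] at this
    exact this
  have hcoeffall : ∀ n, f'.coeff n = g.coeff n := by
    intro n
    by_cases hcase : ∃ k, n = p ^ k
    · obtain ⟨k, rfl⟩ := hcase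
      rcases Nat.lt_or_ge r k with hk | hk
      · have hlt : p ^ r < p ^ k := Nat.pow_lt_pow_right (by omega) hk
        rw [coeff_eq_zero_of_natDegree_lt (by omega : f'.natDegree < p ^ k),
          coeff_eq_zero_of_natDegree_lt (by omega : g.natDegree < p ^ k)]
      · -- k ≤ r
        have hin : p ^ k ≤ p ^ r := Nat.pow_le_pow_right (by omega) hk
        set i := r - k with hi
        have hirk : r - i = k := by omega
        have hyi : f'.coeff (p ^ k) = y i := by rw [hyc, hirk]
        have hxi : f.coeff (p ^ k) = x i := by rw [hxc, hirk]
        have hwi : w i = p ^ r - p ^ k := by rw [hwid i (by omega), hirk]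
        have hgc : g.coeff (p ^ k) = α ^ (p ^ r - p ^ k) * f.coeff (p ^ k) := by
          have hpow : α ^ (p ^ r - p ^ k) * α ^ (p ^ k) = α ^ (p ^ r) := by
            rw [← pow_add]; congr 1; omega
          apply mul_right_cancel₀ (pow_ne_zero (p ^ k) hα0)
          rw [hgcoeff]
          linear_combination (-f.coeff (p ^ k)) * hpow
        rw [hgc, hyi, hxi, hcoe i (by omega), hwi]
    · push_neg at hcase
      have hf'0 : f'.coeff n = 0 := by rw [hf']; exact fE_coeff_eq_zero E' hcase
      have hf0 : f.coeff n = 0 := by rw [hf]; exact fE_coeff_eq_zero E hcase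
      have := hgcoeff n
      rw [hf0, mul_zero] at this
      have hg0 : g.coeff n = 0 := by
        rcases mul_eq_zero.mp this with h5 | h5
        · exact h5
        · exact absurd h5 (pow_ne_zero _ hα0)
      rw [hf'0, hg0]
  have hfg : f' = g := Polynomial.ext hcoeffall
  -- conclude set equality
  refine ⟨α, hα0, ?_⟩
  ext z
  have hz1 : z ∈ (E' : Set F) ↔ f'.eval z = 0 := by
    rw [hf', eval_prod, Finset.prod_eq_zero_iff]
    simp only [eval_sub, eval_X, eval_C, sub_eq_zero]
    constructor
    · intro hz; exact ⟨⟨z, hz⟩, Finset.mem_univ _, rfl⟩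
    · rintro ⟨c, -, rfl⟩; exact c.2
  have hz2 : z ∈ α • (E : Set F) ↔ g.eval z = 0 := by
    rw [hg, eval_prod, Finset.prod_eq_zero_iff]
    simp only [eval_sub, eval_X, eval_C, sub_eq_zero]
    constructor
    · intro hz
      obtain ⟨c, hc, rfl⟩ := Set.mem_smul_set.mp hz
      exact ⟨⟨c, hc⟩, Finset.mem_univ _, rfl⟩
    · rintro ⟨c, -, rfl⟩
      exact Set.mem_smul_set.mpr ⟨(c : F), c.2, rfl⟩
  rw [hz1, hfg, ← hz2]
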